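/- For all integers m, n, r ≥ 0, (r+1)^{⟨m+n⟩} = Σ_{i=0}^{n} Σ_{j=0}^{m} m^{⟨n-i⟩} · C(n,i) · c^{(r)}(m,j) · (r+1)^{⟨i⟩}, where a^{⟨b⟩} denotes the rising factorial and C(n,i) is the binomial coefficient. -/
import Mathlib


open Finset

/-- Rising factorial: a^{⟨b⟩} = a(a+1)⋯(a+b-1). -/
def rise (a b : ℕ) : ℕ := ∏ ℓ ∈ range b, (a + ℓ)

/-- (Signless) Stirling numbers of the first kind. -/
def stirling1 : ℕ → ℕ → ℕ
  | 0, 0 => 1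
  | 0, _ + 1 => 0
  | _ + 1, 0 => 0
  | n + 1, k + 1 => stirling1 n k + n * stirling1 n (k + 1)

/-- r-Stirling numbers of the first kind. -/
def rStirling1 (r n k : ℕ) : ℕ :=
  ∑ i ∈ range (n + 1), rise r (n - i) * n.choose i * stirling1 i k

lemma rise_zero (a : ℕ) : rise a 0 = 1 := by simp [rise]

lemma rise_succ (a b : ℕ) : rise a (b + 1) = rise a b * (a + b) := by
  simp [rise, Finset.prod_range_succ]

lemma rise_split (a m n : ℕ) : rise a (m + n) = rise a m * rise (a + m) n := by
  simp [rise, Finset.prod_range_add, add_assoc]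

lemma rise_vandermonde (a b : ℕ) : ∀ n : ℕ,
    rise (a + b) n = ∑ i ∈ range (n + 1), n.choose i * rise a i * rise b (n - i) := by
  intro n
  induction n with
  | zero => simp [rise_zero]
  | succ n ih =>
    rw [rise_succ, ih, Finset.sum_mul]
    have key : ∀ i ∈ range (n + 1),
        n.choose i * rise a i * rise b (n - i) * (a + b + n)
          = n.choose i * (rise a (i+1) * rise b (n - i))
            + n.choose i * (rise a i * rise b (n - i + 1)) := by
      intro i hi
      have hin : i ≤ n := Nat.lt_succ_iff.mp (Finset.mem_range.mp hi)
      have : a + b + n = (a + i) + (b + (n - i)) := by omega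
      rw [this, rise_succ, rise_succ]
      ring
    rw [Finset.sum_congr rfl key, Finset.sum_add_distrib]
    have h1 : ∑ i ∈ range (n + 1), n.choose i * (rise a (i+1) * rise b (n - i))
        = ∑ i ∈ range (n + 2), n.choose (i - 1) * (rise a i * rise b (n + 1 - i)) * (if i = 0 then 0 else 1) := by
      rw [Finset.sum_range_succ' (fun i => n.choose (i - 1) * (rise a i * rise b (n + 1 - i)) * (if i = 0 then 0 else 1))]
      simp only [if_neg (Nat.succ_ne_zero _), mul_one, Nat.add_sub_cancel, if_pos rfl, mul_zero, add_zero]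
      apply Finset.sum_congr rfl
      intro i hi
      have hin : i ≤ n := Nat.lt_succ_iff.mp (Finset.mem_range.mp hi)
      have e : n + 1 - (i + 1) = n - i := by omega
      rw [e]
    have h2 : ∑ i ∈ range (n + 1), n.choose i * (rise a i * rise b (n - i + 1))
        = ∑ i ∈ range (n + 2), n.choose i * (rise a i * rise b (n + 1 - i)) := by
      rw [Finset.sum_range_succ (fun i => n.choose i * (rise a i * rise b (n + 1 - i)))]
      rw [Nat.choose_succ_self, zero_mul, add_zero]
      apply Finset.sum_congr rfl
      intro i hi
      have hin : i ≤ n := Nat.lt_succ_iff.mp (Finset.mem_range.mp hi)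
      have e : n + 1 - i = n - i + 1 := by omega
      rw [e]
    rw [h1, h2, ← Finset.sum_add_distrib]
    apply Finset.sum_congr rfl
    intro i hi
    rcases i with _ | i
    · simp
    · simp only [if_neg (Nat.succ_ne_zero _), mul_one, Nat.succ_sub_one]
      rw [Nat.choose_succ_succ' (n) i]
      ring



lemma rise_one_eq (b : ℕ) : rise 1 b = b.factorial := by
  induction b with
  | zero => simp [rise_zero]
  | succ b ih => rw [rise_succ, ih, Nat.factorial_succ]; ring

lemma stirling1_eq_zero : ∀ n k : ℕ, n < k → stirling1 n k = 0 := by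
  intro n
  induction n with
  | zero => intro k hk; rcases k with _ | k; · omega
            · rfl
  | succ n ih =>
    intro k hk
    rcases k with _ | k
    · omega
    · show stirling1 n k + n * stirling1 n (k + 1) = 0
      rw [ih k (by omega), ih (k+1) (by omega)]
      simp

lemma stirling1_sum (n : ℕ) : ∑ j ∈ range (n + 1), stirling1 n j = n.factorial := by
  induction n with
  | zero => simp [stirling1]
  | succ n ih =>
    rw [Finset.sum_range_succ' (fun j => stirling1 (n+1) j)]
    have h0 : stirling1 (n+1) 0 = 0 := rfl
    rw [h0, add_zero]
    have hstep : ∀ j, stirling1 (n+1) (j+1) = stirling1 n j + n * stirling1 n (j+1) := fun j => rfl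
    simp only [hstep]
    rw [Finset.sum_add_distrib, ih, ← Finset.mul_sum]
    have hsum : ∑ j ∈ range (n + 1), stirling1 n (j + 1)
        = ∑ j ∈ range (n + 2), stirling1 n j - stirling1 n 0 := by
      rw [Finset.sum_range_succ' (fun j => stirling1 n j), Nat.add_sub_cancel]
    rw [hsum, Finset.sum_range_succ, stirling1_eq_zero n (n+1) (by omega), add_zero, ih]
    rcases n with _ | n
    · simp [Nat.factorial]
    · have : stirling1 (n+1) 0 = 0 := rfl
      rw [this, Nat.sub_zero, Nat.factorial_succ (n+1)]
      ring

lemma rStirling1_sum (r m : ℕ) :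
    ∑ j ∈ range (m + 1), rStirling1 r m j = rise (r + 1) m := by
  unfold rStirling1
  rw [Finset.sum_comm]
  have h : ∀ i ∈ range (m + 1),
      (∑ j ∈ range (m + 1), rise r (m - i) * m.choose i * stirling1 i j)
        = rise r (m - i) * m.choose i * i.factorial := by
    intro i hi
    have him : i ≤ m := Nat.lt_succ_iff.mp (Finset.mem_range.mp hi)
    rw [← Finset.mul_sum]
    congr 1
    rw [← stirling1_sum i]
    rw [← Finset.sum_subset (Finset.range_subset_range.mpr (by omega : i + 1 ≤ m + 1))]
    intro x hx hnx
    exact stirling1_eq_zero i x (by simp at hx hnx; omega)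
  rw [Finset.sum_congr rfl h]
  have : r + 1 = 1 + r := by omega
  rw [this, rise_vandermonde 1 r m]
  apply Finset.sum_congr rfl
  intro i hi
  rw [rise_one_eq]
  ring

theorem rise_add (m n r : ℕ) :
    rise (r + 1) (m + n) =
      ∑ i ∈ range (n + 1), ∑ j ∈ range (m + 1),
        rise m (n - i) * n.choose i * rStirling1 r m j * rise (r + 1) i := by
  have hR : ∀ i, (∑ j ∈ range (m + 1),
      rise m (n - i) * n.choose i * rStirling1 r m j * rise (r + 1) i)
        = rise m (n - i) * n.choose i * rise (r + 1) m * rise (r + 1) i := by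
    intro i
    rw [← Finset.sum_mul, ← Finset.mul_sum, rStirling1_sum]
  simp only [hR]
  rw [rise_split (r + 1) m n, rise_vandermonde (r + 1) m n, Finset.mul_sum]
  apply Finset.sum_congr rfl
  intro i hi
  ring
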